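/- In the torus J = C³/Λ, the fixed locus of the order-4 element h₄ : (z₁,z₂,z₃) ↦ (z₁,−z₃,z₂) is connected and equals the image of the first coordinate axis; equivalently, every z ∈ C³ with (0, z₂+z₃, z₃−z₂) ∈ Λ lies in C·(1,0,0) + Λ. -/
import Mathlib

noncomputable section

def Kalpha : ℂ := (1 + Complex.I * Real.sqrt 7) / 2
def Kalphabar : ℂ := (1 - Complex.I * Real.sqrt 7) / 2

def Ke1 : Fin 3 → ℂ := ![0, Kalpha, Kalpha]
def Ke2 : Fin 3 → ℂ := ![0, 0, 2]
def Ke3 : Fin 3 → ℂ := ![1, 1, Kalphabar]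

def LambdaZ : Submodule ℤ (Fin 3 → ℂ) :=
  Submodule.span ℤ {Ke1, Ke2, Ke3, Kalpha • Ke1, Kalpha • Ke2, Kalpha • Ke3}

lemma hsq : (Real.sqrt 7 : ℂ) ^ 2 = 7 := by
  rw [← Complex.ofReal_pow, Real.sq_sqrt (by norm_num : (7:ℝ) ≥ 0)]; norm_num

lemma halpha : Kalpha ^ 2 = Kalpha - 2 := by
  unfold Kalpha
  linear_combination (Complex.I ^ 2 / 4) * hsq + ((7:ℂ)/4) * Complex.I_sq

lemma halphabar : Kalphabar = 1 - Kalpha := by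
  unfold Kalpha Kalphabar; ring

def gens : Fin 6 → (Fin 3 → ℂ)
  | 0 => Ke1 | 1 => Ke2 | 2 => Ke3
  | 3 => Kalpha • Ke1 | 4 => Kalpha • Ke2 | 5 => Kalpha • Ke3

lemma lambda_eq : LambdaZ = Submodule.span ℤ (Set.range gens) := by
  unfold LambdaZ
  congr 1
  ext v
  constructor
  · rintro (rfl | rfl | rfl | rfl | rfl | rfl)
    exacts [⟨0, rfl⟩, ⟨1, rfl⟩, ⟨2, rfl⟩, ⟨3, rfl⟩, ⟨4, rfl⟩, ⟨5, rfl⟩]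
  · rintro ⟨i, rfl⟩; fin_cases i <;> simp [gens]

lemma mem1 : Ke1 ∈ LambdaZ := Submodule.subset_span (by simp)
lemma mem2 : Ke2 ∈ LambdaZ := Submodule.subset_span (by simp)
lemma mem3 : Ke3 ∈ LambdaZ := Submodule.subset_span (by simp)
lemma mem4 : Kalpha • Ke1 ∈ LambdaZ := Submodule.subset_span (by simp)
lemma mem5 : Kalpha • Ke2 ∈ LambdaZ := Submodule.subset_span (by simp)
lemma mem6 : Kalpha • Ke3 ∈ LambdaZ := Submodule.subset_span (by simp)

def Tlin : (Fin 3 → ℂ) →ₗ[ℤ] (Fin 3 → ℂ) where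
  toFun z := ![0, z 1 + z 2, z 2 - z 1]
  map_add' u v := by funext i; fin_cases i <;> simp <;> ring
  map_smul' c v := by funext i; fin_cases i <;> simp <;> ring

lemma Tmaps : LambdaZ ≤ LambdaZ.comap Tlin := by
  conv_lhs => rw [LambdaZ]
  rw [Submodule.span_le]
  rintro v (rfl | rfl | rfl | rfl | rfl | rfl)
  all_goals simp only [SetLike.mem_coe, Submodule.mem_comap]
  · have h : Tlin Ke1 = (2:ℤ) • Ke1 - Kalpha • Ke2 := by
      funext i; fin_cases i
      · simp [Tlin, Ke1, Ke2]
      · simp [Tlin, Ke1, Ke2]; ring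
      · simp [Tlin, Ke1, Ke2]; ring
    rw [h]; exact sub_mem (Submodule.smul_mem _ _ mem1) mem5
  · have h : Tlin Ke2 = Ke1 - Kalpha • Ke1 := by
      funext i; fin_cases i
      · simp [Tlin, Ke1, Ke2]
      · simp [Tlin, Ke1, Ke2]; linear_combination halpha
      · simp [Tlin, Ke1, Ke2]; linear_combination halpha
    rw [h]; exact sub_mem mem1 mem4
  · have h : Tlin Ke3 = -(Kalpha • Ke1) - Ke2 := by
      funext i; fin_cases i
      · simp [Tlin, Ke1, Ke2, Ke3]
      · simp [Tlin, Ke1, Ke2, Ke3, halphabar]; linear_combination halpha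
      · simp [Tlin, Ke1, Ke2, Ke3, halphabar]; linear_combination halpha
    rw [h]; exact sub_mem (neg_mem mem4) mem2
  · have h : Tlin (Kalpha • Ke1) = (2:ℤ) • (Kalpha • Ke1) - Kalpha • Ke2 + (2:ℤ) • Ke2 := by
      funext i; fin_cases i
      · simp [Tlin, Ke1, Ke2]
      · simp [Tlin, Ke1, Ke2]; ring
      · simp [Tlin, Ke1, Ke2]; linear_combination (-2 : ℂ) * halpha
    rw [h]
    exact add_mem (sub_mem (Submodule.smul_mem _ _ mem4) mem5) (Submodule.smul_mem _ _ mem2)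
  · have h : Tlin (Kalpha • Ke2) = (2:ℤ) • Ke1 := by
      funext i; fin_cases i
      · simp [Tlin, Ke1, Ke2]
      · simp [Tlin, Ke1, Ke2]; ring
      · simp [Tlin, Ke1, Ke2]; ring
    rw [h]; exact Submodule.smul_mem _ _ mem1
  · have h : Tlin (Kalpha • Ke3) = (2:ℤ) • Ke1 - Kalpha • Ke1 - Kalpha • Ke2 := by
      funext i; fin_cases i
      · simp [Tlin, Ke1, Ke2, Ke3]
      · simp [Tlin, Ke1, Ke2, Ke3, halphabar]; ring
      · simp [Tlin, Ke1, Ke2, Ke3, halphabar]; ring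
    rw [h]; exact sub_mem (sub_mem (Submodule.smul_mem _ _ mem1) mem4) mem5

/-- The fixed locus in `J = ℂ³/Λ` of the order-4 element
`h₄ : (z₁,z₂,z₃) ↦ (z₁,-z₃,z₂)` is connected and equals the image of the first
coordinate axis: `(0, z₂+z₃, z₃-z₂) ∈ Λ` iff `z ∈ ℂ·(1,0,0) + Λ`. -/
theorem fixed_locus_of_order_four :
    ∀ z : Fin 3 → ℂ,
      (![(0 : ℂ), z 1 + z 2, z 2 - z 1] ∈ LambdaZ) ↔
      (∃ x : ℂ, z - x • ![1,0,0] ∈ LambdaZ) := by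
  intro z
  constructor
  · intro h
    rw [lambda_eq, Submodule.mem_span_range_iff_exists_fun] at h
    obtain ⟨c, hc⟩ := h
    have h0 := congrFun hc 0
    have h1 := congrFun hc 1
    have h2 := congrFun hc 2
    simp only [Fin.sum_univ_six, Finset.sum_apply, Pi.add_apply, Pi.smul_apply, gens,
      Ke1, Ke2, Ke3, smul_eq_mul, zsmul_eq_mul, Matrix.cons_val_zero, Matrix.cons_val_one,
      Matrix.head_cons, Matrix.cons_val_two, Matrix.tail_cons, Pi.mul_apply, Pi.intCast_apply, mul_zero, mul_one, zero_add, add_zero] at h0 h1 h2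
    -- extract c 2 = 0 and c 5 = 0 from the first coordinate
    have him := congrArg Complex.im h0
    simp [Kalpha, Complex.add_im, Complex.mul_im, Complex.div_im] at him
    rw [him] at h0 h1 h2
    simp only [Int.cast_zero, zero_mul, mul_zero, add_zero, zero_add] at h0 h1 h2
    norm_cast at h0
    rw [h0] at h1 h2
    simp only [Int.cast_zero, zero_mul, mul_zero, add_zero, zero_add] at h1 h2
    refine ⟨z 0 - ((c 1 : ℂ) - ((c 0 : ℂ) + c 1 + c 3) * Kalpha), ?_⟩
    have hrep : z - (z 0 - ((c 1 : ℂ) - ((c 0 : ℂ) + c 1 + c 3) * Kalpha)) • ![1,0,0] =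
        (c 0 + c 3 - c 4) • Ke1 + (c 0 + 2 * c 1) • Ke2 + c 1 • Ke3 +
        c 1 • (Kalpha • Ke1) + c 4 • (Kalpha • Ke2) +
        (-(c 0 + c 1 + c 3)) • (Kalpha • Ke3) := by
      funext i
      fin_cases i
      · simp [Ke1, Ke2, Ke3, halphabar]
        ring
      · simp [Ke1, Ke2, Ke3, halphabar]
        linear_combination (h2 - h1) / 2 - (c 1 : ℂ) * halpha
      · simp [Ke1, Ke2, Ke3, halphabar]
        linear_combination -(h1 + h2) / 2 - ((c 0 : ℂ) + 2 * c 1) * halpha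
    rw [hrep]
    exact add_mem (add_mem (add_mem (add_mem (add_mem
      (Submodule.smul_mem _ _ mem1) (Submodule.smul_mem _ _ mem2))
      (Submodule.smul_mem _ _ mem3)) (Submodule.smul_mem _ _ mem4))
      (Submodule.smul_mem _ _ mem5)) (Submodule.smul_mem _ _ mem6)
  · rintro ⟨x, hw⟩
    have h := Tmaps hw
    rw [Submodule.mem_comap] at h
    have e1 : (z - x • ![1,0,0] : Fin 3 → ℂ) 1 = z 1 := by simp
    have e2 : (z - x • ![1,0,0] : Fin 3 → ℂ) 2 = z 2 := by simp
    have he : Tlin (z - x • ![1,0,0]) = ![(0 : ℂ), z 1 + z 2, z 2 - z 1] := by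
      simp only [Tlin, LinearMap.coe_mk, AddHom.coe_mk, e1, e2]
    rwa [he] at h

end
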